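/- Let G be a finite group containing a normal subgroup H. Then every coset of H in G has a representative g such that every prime divisor of the order of g divides the index [G : H]. -/

import Mathlib

/-- **Coset representatives of restricted order.** Let `G` be a finite group with a
normal subgroup `H`. Then every coset of `H` in `G` has a representative `g` such that
every prime divisor of `ord(g)` divides the index `[G : H]`. -/
theorem coset_representative_order {G : Type*} [Group G] [Finite G]
    (H : Subgroup G) (hH : H.Normal) :
    ∀ C : G ⧸ H, ∃ g : G, QuotientGroup.mk g = C ∧
      ∀ p : ℕ, p.Prime → p ∣ orderOf g → p ∣ H.index := by
  intro C
  obtain ⟨x, rfl⟩ := QuotientGroup.mk_surjective C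
  set m := orderOf x with hm
  have hm0 : m ≠ 0 := (orderOf_pos x).ne'
  have hidx0 : H.index ≠ 0 := Subgroup.index_ne_zero_of_finite
  set a := Nat.gcd m (H.index ^ m) with ha
  have hpow0 : H.index ^ m ≠ 0 := pow_ne_zero _ hidx0
  have ha0 : a ≠ 0 := Nat.gcd_ne_zero_left hm0
  have haDvd : a ∣ m := Nat.gcd_dvd_left _ _
  set b := m / a with hb
  have hab : a * b = m := Nat.mul_div_cancel' haDvd
  have hb0 : b ≠ 0 := by
    intro h
    rw [h, mul_zero] at hab
    exact hm0 hab.symm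
  -- b is coprime to H.index
  have hbcop : Nat.Coprime b H.index := by
    rw [Nat.coprime_comm]
    rw [Nat.coprime_iff_gcd_eq_one]
    by_contra h
    obtain ⟨p, hp, hpdvd⟩ := Nat.exists_prime_and_dvd h
    have hpb : p ∣ b := hpdvd.trans (Nat.gcd_dvd_right _ _)
    have hpi : p ∣ H.index := hpdvd.trans (Nat.gcd_dvd_left _ _)
    -- factorization of b at p is 0
    have hbfact : b.factorization p = m.factorization p - a.factorization p := by
      rw [hb, Nat.factorization_div haDvd]; rfl
    have hafact : a.factorization p = m.factorization p := by
      rw [ha, Nat.factorization_gcd hm0 hpow0]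
      have h1 : (H.index ^ m).factorization p = m * H.index.factorization p := by
        rw [Nat.factorization_pow]; rfl
      have h2 : 1 ≤ H.index.factorization p :=
        (Nat.Prime.factorization_pos_of_dvd hp hidx0 hpi)
      have h3 : m.factorization p ≤ m * H.index.factorization p :=
        le_trans (le_of_lt (Nat.factorization_lt p hm0)) (Nat.le_mul_of_pos_right m h2)
      simp only [Finsupp.inf_apply, h1]
      exact min_eq_left h3
    have : b.factorization p = 0 := by rw [hbfact, hafact, Nat.sub_self]
    have := (Nat.Prime.factorization_pos_of_dvd hp hb0 hpb).ne'
    exact this ‹b.factorization p = 0›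
  -- n = order of the coset
  set n := orderOf (QuotientGroup.mk x : G ⧸ H) with hn
  have hnidx : n ∣ H.index := by
    rw [Subgroup.index_eq_card]
    exact orderOf_dvd_natCard _
  have hna : n ∣ a := Nat.dvd_gcd (orderOf_dvd_of_pow_eq_one (by
      rw [← QuotientGroup.mk_pow, pow_orderOf_eq_one, QuotientGroup.mk_one]))
    (hnidx.trans (dvd_pow_self _ hm0))
  have hbn : Nat.Coprime b n := Nat.Coprime.coprime_dvd_right hnidx hbcop
  -- find k with b ∣ k and k ≡ 1 [MOD n]
  obtain ⟨k, hbk, hk1⟩ : ∃ k : ℕ, b ∣ k ∧ k ≡ 1 [MOD n] := by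
    rcases eq_or_ne n 1 with h1 | h1
    · exact ⟨b, dvd_rfl, by simp [Nat.ModEq, h1, Nat.mod_one]⟩
    · have hn1 : 1 < n := Nat.one_lt_iff_ne_zero_and_ne_one.mpr ⟨(orderOf_pos _).ne', h1⟩
      obtain ⟨u, -, hu⟩ := Nat.exists_mul_mod_eq_one_of_coprime hbn hn1
      exact ⟨b * u, Dvd.intro u rfl, by
        unfold Nat.ModEq
        rw [hu, Nat.one_mod_eq_one.mpr (by omega)]⟩
  refine ⟨x ^ k, ?_, ?_⟩
  · have : (QuotientGroup.mk x : G ⧸ H) ^ k = (QuotientGroup.mk x : G ⧸ H) ^ 1 :=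
      pow_eq_pow_iff_modEq.mpr hk1
    rw [QuotientGroup.mk_pow]
    rw [this, pow_one]
  · intro p hp hpord
    have hdvd : orderOf (x ^ k) ∣ a := by
      apply orderOf_dvd_of_pow_eq_one
      rw [← pow_mul]
      apply orderOf_dvd_iff_pow_eq_one.mp
      rw [← hm, ← hab]
      obtain ⟨c, rfl⟩ := hbk
      ring_nf
      exact Dvd.intro c (by ring)
    have : p ∣ H.index ^ m := (hpord.trans hdvd).trans (Nat.gcd_dvd_right _ _)
    exact hp.dvd_of_dvd_pow this
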